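/- Let E be a real Banach space, ε > 0, t₀ ≤ t₁ real numbers and set Δt = t₁ - t₀. Suppose F : ℝ → E is twice continuously differentiable on [t₀, t₁] with ‖F(s)‖ ≤ M₀, ‖F'(s)‖ ≤ M₁ and ‖F''(s)‖ ≤ M₂ for all s ∈ [t₀, t₁], and g : ℝ → E is differentiable on [t₀, t₁] with g'(t) = -(1/ε²)·g(t) - (1/ε)·F(t) for every t ∈ [t₀, t₁]. Then ‖g(t₁) - e^{-Δt/ε²}·g(t₀) + (Δt/ε)·e^{-Δt/(2ε²)}·F((t₀+t₁)/2)‖ ≤ (Δt³/(24ε))·(M₂ + 2M₁/ε² + M₀/ε⁴). -/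

import Mathlib

open Set

lemma taylorR {E : Type*} [NormedAddCommGroup E] [NormedSpace ℝ E]
    {a b C : ℝ} (hab : a ≤ b) {f f' f'' : ℝ → E}
    (h1 : ∀ s ∈ Icc a b, HasDerivAt f (f' s) s)
    (h2 : ∀ s ∈ Icc a b, HasDerivAt f' (f'' s) s)
    (hC : ∀ s ∈ Icc a b, ‖f'' s‖ ≤ C) :
    ‖f b - f a - (b - a) • f' a‖ ≤ C * (b - a) ^ 2 / 2 := by
  have ha : a ∈ Icc a b := ⟨le_refl a, hab⟩
  set q : ℝ → E := fun s => f s - f a - (s - a) • f' a with hq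
  have hq' : ∀ s ∈ Icc a b, HasDerivAt q (f' s - f' a) s := by
    intro s hs
    have := ((h1 s hs).sub_const (f a)).sub
      ((((hasDerivAt_id s).sub_const a)).smul_const (f' a))
    exact this.congr_deriv (by simp)
  have hlip : ∀ s ∈ Icc a b, ‖f' s - f' a‖ ≤ C * (s - a) := by
    intro s hs
    exact norm_image_sub_le_of_norm_deriv_le_segment'
      (fun x hx => (h2 x hx).hasDerivWithinAt)
      (fun x hx => hC x ⟨hx.1, hx.2.le⟩) s hs
  have hqc : ContinuousOn q (Icc a b) :=
    fun s hs => ((hq' s hs).continuousAt).continuousWithinAt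
  have hB : ∀ x : ℝ, HasDerivAt (fun s => C * (s - a) ^ 2 / 2) (C * (x - a)) x := by
    intro x
    have h := (((hasDerivAt_id x).sub_const a).pow 2).const_mul C |>.div_const 2
    refine h.congr_deriv ?_
    simp only [id_eq]
    ring
  have := image_norm_le_of_norm_deriv_right_le_deriv_boundary hqc
    (fun x hx => (hq' x ⟨hx.1, hx.2.le⟩).hasDerivWithinAt)
    (by simp [hq]) hB
    (fun x hx => hlip x ⟨hx.1, hx.2.le⟩) (right_mem_Icc.2 hab)
  simpa [hq] using this

lemma taylorL {E : Type*} [NormedAddCommGroup E] [NormedSpace ℝ E]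
    {a b C : ℝ} (hab : a ≤ b) {f f' f'' : ℝ → E}
    (h1 : ∀ s ∈ Icc a b, HasDerivAt f (f' s) s)
    (h2 : ∀ s ∈ Icc a b, HasDerivAt f' (f'' s) s)
    (hC : ∀ s ∈ Icc a b, ‖f'' s‖ ≤ C) :
    ‖f a - f b + (b - a) • f' b‖ ≤ C * (b - a) ^ 2 / 2 := by
  have hmem : ∀ s ∈ Icc a b, a + b - s ∈ Icc a b := by
    intro s hs; constructor <;> [linarith [hs.2]; linarith [hs.1]]
  have hneg : ∀ s : ℝ, HasDerivAt (fun t : ℝ => a + b - t) (-1 : ℝ) s := by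
    intro s
    exact (hasDerivAt_id s).const_sub (a + b)
  have h1' : ∀ s ∈ Icc a b,
      HasDerivAt (fun t => f (a + b - t)) ((-1 : ℝ) • f' (a + b - s)) s := by
    intro s hs
    exact (h1 _ (hmem s hs)).scomp s (hneg s)
  have h2' : ∀ s ∈ Icc a b,
      HasDerivAt (fun t => (-1 : ℝ) • f' (a + b - t)) (f'' (a + b - s)) s := by
    intro s hs
    have := ((h2 _ (hmem s hs)).scomp s (hneg s)).const_smul (-1 : ℝ)
    exact this.congr_deriv (by simp)
  have := taylorR hab h1' (fun s hs => h2' s hs) (fun s hs => hC _ (hmem s hs))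
  have e1 : a + b - b = a := by ring
  have e2 : a + b - a = b := by ring
  rw [e1, e2] at this
  simpa [sub_eq_add_neg, add_comm] using this



open intervalIntegral MeasureTheory in
lemma midpt {E : Type*} [NormedAddCommGroup E] [NormedSpace ℝ E] [CompleteSpace E]
    {a b C : ℝ} (hab : a ≤ b) {φ φ' φ'' : ℝ → E}
    (h1 : ∀ s ∈ Icc a b, HasDerivAt φ (φ' s) s)
    (h2 : ∀ s ∈ Icc a b, HasDerivAt φ' (φ'' s) s)
    (hC : ∀ s ∈ Icc a b, ‖φ'' s‖ ≤ C) :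
    ‖(∫ s in a..b, φ s) - (b - a) • φ ((a + b) / 2)‖ ≤ C * (b - a) ^ 3 / 24 := by
  set m := (a + b) / 2 with hm
  set d := (b - a) / 2 with hd
  have hd0 : 0 ≤ d := by simp [hd]; linarith
  have hφc : ContinuousOn φ (Icc a b) :=
    fun s hs => ((h1 s hs).continuousAt).continuousWithinAt
  -- global continuous extension
  set Φ : ℝ → E := fun s => φ (Set.projIcc a b hab s) with hΦdef
  have hΦc : Continuous Φ :=
    hφc.comp_continuous (continuous_subtype_val.comp (continuous_projIcc))
      (fun x => (Set.projIcc a b hab x).2)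
  have hΦeq : ∀ s ∈ Icc a b, Φ s = φ s := by
    intro s hs; simp [hΦdef, Set.projIcc_of_mem hab hs]
  set G : ℝ → E := fun y => ∫ s in m..y, Φ s with hG
  have hGd : ∀ y : ℝ, HasDerivAt G (Φ y) y := by
    intro y
    exact integral_hasDerivAt_right (hΦc.intervalIntegrable _ _)
      (hΦc.stronglyMeasurableAtFilter _ _) hΦc.continuousAt
  set ψ : ℝ → E := fun u => G (m + u) - G (m - u) - (2 * u) • φ m with hψ
  have hmm : m ∈ Icc a b := ⟨by linarith, by linarith⟩
  have hmem : ∀ u ∈ Icc (0 : ℝ) d, m + u ∈ Icc a b ∧ m - u ∈ Icc a b := by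
    intro u hu
    constructor <;> constructor <;>
      simp only [hm, hd] at * <;> [linarith [hu.1]; linarith [hu.2]; linarith [hu.2]; linarith [hu.1]]
  have hψd : ∀ u : ℝ, HasDerivAt ψ (Φ (m + u) + Φ (m - u) - (2 : ℝ) • φ m) u := by
    intro u
    have hA : HasDerivAt (fun u => G (m + u)) ((1 : ℝ) • Φ (m + u)) u :=
      (hGd (m + u)).scomp u (by simpa using (hasDerivAt_id u).const_add m)
    have hB : HasDerivAt (fun u => G (m - u)) ((-1 : ℝ) • Φ (m - u)) u :=
      (hGd (m - u)).scomp u (by exact (hasDerivAt_id u).const_sub m)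
    have hc : HasDerivAt (fun u : ℝ => (2 * u) • φ m) ((2 : ℝ) • φ m) u := by
      simpa using ((hasDerivAt_id u).const_mul 2).smul_const (φ m)
    have := (hA.sub hB).sub hc
    exact this.congr_deriv (by simp)
  have hbound : ∀ u ∈ Icc (0 : ℝ) d, ‖Φ (m + u) + Φ (m - u) - (2 : ℝ) • φ m‖ ≤ C * u ^ 2 := by
    intro u hu
    obtain ⟨hp, hq⟩ := hmem u hu
    have hsub1 : Icc m (m + u) ⊆ Icc a b := Icc_subset_Icc hmm.1 hp.2
    have hsub2 : Icc (m - u) m ⊆ Icc a b := Icc_subset_Icc hq.1 hmm.2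
    have hu0 : (0:ℝ) ≤ u := hu.1
    have hR := taylorR (by linarith : m ≤ m + u)
      (fun s hs => h1 s (hsub1 hs)) (fun s hs => h2 s (hsub1 hs))
      (fun s hs => hC s (hsub1 hs))
    have hL := taylorL (by linarith : m - u ≤ m)
      (fun s hs => h1 s (hsub2 hs)) (fun s hs => h2 s (hsub2 hs))
      (fun s hs => hC s (hsub2 hs))
    rw [add_sub_cancel_left] at hR
    rw [sub_sub_cancel] at hL
    have key : Φ (m + u) + Φ (m - u) - (2 : ℝ) • φ m
        = (φ (m + u) - φ m - u • φ' m) + (φ (m - u) - φ m + u • φ' m) := by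
      rw [hΦeq _ hp, hΦeq _ hq]
      module
    rw [key]
    calc ‖_ + _‖ ≤ ‖φ (m + u) - φ m - u • φ' m‖ + ‖φ (m - u) - φ m + u • φ' m‖ :=
          norm_add_le _ _
      _ ≤ C * u ^ 2 / 2 + C * u ^ 2 / 2 := add_le_add hR hL
      _ = C * u ^ 2 := by ring
  have hψc : ContinuousOn ψ (Icc 0 d) :=
    fun u hu => ((hψd u).continuousAt).continuousWithinAt
  have hBd : ∀ x : ℝ, HasDerivAt (fun u => C * u ^ 3 / 3) (C * x ^ 2) x := by
    intro x
    have h := ((hasDerivAt_pow 3 x).const_mul C).div_const 3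
    refine h.congr_deriv ?_
    push_cast
    ring
  have hfin := image_norm_le_of_norm_deriv_right_le_deriv_boundary hψc
    (fun u hu => (hψd u).hasDerivWithinAt)
    (by
      have h0 : ψ 0 = 0 := by simp [hψ, hG]
      simp [h0]) hBd
    (fun u hu => hbound u ⟨hu.1, hu.2.le⟩) (right_mem_Icc.2 hd0)
  -- ψ d = ∫ a..b φ - (b-a) • φ m
  have hmd1 : m + d = b := by simp [hm, hd]; ring
  have hmd2 : m - d = a := by simp [hm, hd]; ring
  have hsplit : G b - G a = ∫ s in a..b, Φ s := by
    have h1i : IntervalIntegrable Φ volume a m := hΦc.intervalIntegrable _ _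
    have h2i : IntervalIntegrable Φ volume m b := hΦc.intervalIntegrable _ _
    have := integral_add_adjacent_intervals h1i h2i
    simp only [hG]
    rw [show (∫ s in m..a, Φ s) = -∫ s in a..m, Φ s from integral_symm a m,
      sub_neg_eq_add, add_comm]
    exact this
  have hint_eq : (∫ s in a..b, Φ s) = ∫ s in a..b, φ s := by
    apply integral_congr
    intro s hs
    exact hΦeq s (by rwa [uIcc_of_le hab] at hs)
  have hψdval : ψ d = (∫ s in a..b, φ s) - (b - a) • φ m := by
    simp only [hψ, hmd1, hmd2, hsplit, hint_eq]
    congr 2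
    rw [hd]; ring
  rw [hψdval] at hfin
  calc ‖(∫ s in a..b, φ s) - (b - a) • φ m‖ ≤ C * d ^ 3 / 3 := hfin
    _ = C * (b - a) ^ 3 / 24 := by rw [hd]; ring

open Set intervalIntegral MeasureTheory in
theorem stmt_2_aux {E : Type*} [NormedAddCommGroup E] [NormedSpace ℝ E] [CompleteSpace E]
    (ε t₀ t₁ Δt : ℝ) (hε : 0 < ε) (ht : t₀ ≤ t₁) (hΔt : Δt = t₁ - t₀)
    (M₀ M₁ M₂ : ℝ) (F F' F'' g : ℝ → E)
    (hF' : ∀ s ∈ Set.Icc t₀ t₁, HasDerivAt F (F' s) s)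
    (hF'' : ∀ s ∈ Set.Icc t₀ t₁, HasDerivAt F' (F'' s) s)
    (hM₀ : ∀ s ∈ Set.Icc t₀ t₁, ‖F s‖ ≤ M₀)
    (hM₁ : ∀ s ∈ Set.Icc t₀ t₁, ‖F' s‖ ≤ M₁)
    (hM₂ : ∀ s ∈ Set.Icc t₀ t₁, ‖F'' s‖ ≤ M₂)
    (hg : ∀ t ∈ Set.Icc t₀ t₁,
      HasDerivAt g (-(1 / ε ^ 2) • g t - (1 / ε) • F t) t) :
    ‖g t₁ - Real.exp (-Δt / ε ^ 2) • g t₀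
        + ((Δt / ε) * Real.exp (-Δt / (2 * ε ^ 2))) • F ((t₀ + t₁) / 2)‖
      ≤ (Δt ^ 3 / (24 * ε)) * (M₂ + 2 * M₁ / ε ^ 2 + M₀ / ε ^ 4) := by
  have hε2 : (0:ℝ) < ε ^ 2 := by positivity
  set k : ℝ := 1 / ε ^ 2 with hk
  have hk0 : 0 < k := by positivity
  set e : ℝ → ℝ := fun s => Real.exp ((s - t₁) / ε ^ 2) with he
  have hed : ∀ s : ℝ, HasDerivAt e (e s * k) s := by
    intro s
    have h1 : HasDerivAt (fun s : ℝ => (s - t₁) / ε ^ 2) (1 / ε ^ 2) s := by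
      simpa using ((hasDerivAt_id s).sub_const t₁).div_const (ε ^ 2)
    simpa [he, hk] using h1.exp
  have he0 : ∀ s, 0 < e s := fun s => Real.exp_pos _
  have he1 : ∀ s ∈ Icc t₀ t₁, e s ≤ 1 := by
    intro s hs
    apply Real.exp_le_one_iff.2
    apply div_nonpos_of_nonpos_of_nonneg (by linarith [hs.2]) hε2.le
  set φ : ℝ → E := fun s => e s • F s with hφ
  set φ' : ℝ → E := fun s => e s • F' s + (e s * k) • F s with hφ'
  set φ'' : ℝ → E := fun s =>
    (e s • F'' s + (e s * k) • F' s) + ((e s * k) • F' s + (e s * k * k) • F s) with hφ''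
  have hd1 : ∀ s ∈ Icc t₀ t₁, HasDerivAt φ (φ' s) s :=
    fun s hs => (hed s).smul (hF' s hs)
  have hd2 : ∀ s ∈ Icc t₀ t₁, HasDerivAt φ' (φ'' s) s := by
    intro s hs
    have hA : HasDerivAt (fun s => e s • F' s) (e s • F'' s + (e s * k) • F' s) s :=
      (hed s).smul (hF'' s hs)
    have hc : HasDerivAt (fun s => e s * k) (e s * k * k) s := by
      simpa [mul_comm, mul_assoc, mul_left_comm] using (hed s).mul_const k
    have hB : HasDerivAt (fun s => (e s * k) • F s) ((e s * k) • F' s + (e s * k * k) • F s) s :=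
      hc.smul (hF' s hs)
    exact hA.add hB
  -- bound on φ''
  set C : ℝ := M₂ + 2 * M₁ / ε ^ 2 + M₀ / ε ^ 4 with hC
  have ht₀ : t₀ ∈ Icc t₀ t₁ := ⟨le_refl _, ht⟩
  have hM₀0 : 0 ≤ M₀ := le_trans (norm_nonneg _) (hM₀ t₀ ht₀)
  have hM₁0 : 0 ≤ M₁ := le_trans (norm_nonneg _) (hM₁ t₀ ht₀)
  have hM₂0 : 0 ≤ M₂ := le_trans (norm_nonneg _) (hM₂ t₀ ht₀)
  have hCb : ∀ s ∈ Icc t₀ t₁, ‖φ'' s‖ ≤ C := by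
    intro s hs
    have hesp := he0 s
    have hes1 := he1 s hs
    have n1 : ‖e s • F'' s‖ ≤ e s * M₂ := by
      rw [norm_smul, Real.norm_eq_abs, abs_of_pos hesp]
      exact mul_le_mul_of_nonneg_left (hM₂ s hs) hesp.le
    have n2 : ‖(e s * k) • F' s‖ ≤ e s * k * M₁ := by
      rw [norm_smul, Real.norm_eq_abs, abs_of_pos (by positivity)]
      exact mul_le_mul_of_nonneg_left (hM₁ s hs) (by positivity)
    have n3 : ‖(e s * k * k) • F s‖ ≤ e s * k * k * M₀ := by
      rw [norm_smul, Real.norm_eq_abs, abs_of_pos (by positivity)]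
      exact mul_le_mul_of_nonneg_left (hM₀ s hs) (by positivity)
    have hkk : k * k = 1 / ε ^ 4 := by rw [hk]; field_simp
    calc ‖φ'' s‖ ≤ ‖e s • F'' s + (e s * k) • F' s‖ + ‖(e s * k) • F' s + (e s * k * k) • F s‖ :=
          norm_add_le _ _
      _ ≤ (‖e s • F'' s‖ + ‖(e s * k) • F' s‖) + (‖(e s * k) • F' s‖ + ‖(e s * k * k) • F s‖) :=
          add_le_add (norm_add_le _ _) (norm_add_le _ _)
      _ ≤ (e s * M₂ + e s * k * M₁) + (e s * k * M₁ + e s * k * k * M₀) := by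
          gcongr
      _ ≤ M₂ + 2 * M₁ / ε ^ 2 + M₀ / ε ^ 4 := by
          have b1 : e s * M₂ ≤ M₂ := by nlinarith [mul_nonneg (sub_nonneg.2 hes1) hM₂0]
          have b2 : e s * k * M₁ ≤ M₁ / ε ^ 2 := by
            have : e s * k * M₁ ≤ k * M₁ := by nlinarith [mul_nonneg (sub_nonneg.2 hes1) (mul_nonneg hk0.le hM₁0)]
            calc e s * k * M₁ ≤ k * M₁ := this
              _ = M₁ / ε ^ 2 := by rw [hk]; ring
          have b3 : e s * k * k * M₀ ≤ M₀ / ε ^ 4 := by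
            have h4 : (0:ℝ) < ε ^ 4 := by positivity
            have : e s * (k * k) * M₀ ≤ (k * k) * M₀ := by nlinarith [mul_nonneg (sub_nonneg.2 hes1) (mul_nonneg (mul_nonneg hk0.le hk0.le) hM₀0)]
            calc e s * k * k * M₀ = e s * (k * k) * M₀ := by ring
              _ ≤ (k * k) * M₀ := this
              _ = M₀ / ε ^ 4 := by rw [hkk]; ring
          have hq2 : 2 * M₁ / ε ^ 2 = 2 * (M₁ / ε ^ 2) := by ring
          linarith
      _ = C := hC.symm
  -- midpoint estimate
  have hmid := midpt ht hd1 hd2 hCb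
  -- Duhamel / FTC
  set h : ℝ → E := fun t => e t • g t with hh
  have hhd : ∀ t ∈ uIcc t₀ t₁, HasDerivAt h ((-(1 / ε)) • φ t) t := by
    intro t htmem
    rw [uIcc_of_le ht] at htmem
    have := (hed t).smul (hg t htmem)
    refine this.congr_deriv ?_
    simp only [hφ, hk]
    match_scalars <;> ring
  have hφc : ContinuousOn φ (Icc t₀ t₁) := by
    intro s hs
    exact ((hd1 s hs).continuousAt).continuousWithinAt
  have hint : IntervalIntegrable (fun t => (-(1 / ε)) • φ t) volume t₀ t₁ := by
    apply ContinuousOn.intervalIntegrable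
    rw [uIcc_of_le ht]
    exact hφc.const_smul _
  have hftc := integral_eq_sub_of_hasDerivAt hhd hint
  rw [intervalIntegral.integral_smul] at hftc
  -- identify pieces
  have hht₁ : h t₁ = g t₁ := by simp [hh, he]
  have hht₀ : h t₀ = Real.exp (-Δt / ε ^ 2) • g t₀ := by
    have : (t₀ - t₁) / ε ^ 2 = -Δt / ε ^ 2 := by rw [hΔt]; ring
    simp [hh, he, this]
  set m : ℝ := (t₀ + t₁) / 2 with hm
  have hφm : ((Δt / ε) * Real.exp (-Δt / (2 * ε ^ 2))) • F m = (Δt / ε) • φ m := by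
    have : (m - t₁) / ε ^ 2 = -Δt / (2 * ε ^ 2) := by
      rw [hΔt, hm]; field_simp; ring
    rw [hφ]
    simp only [he, this]
    rw [smul_smul]
  have key : g t₁ - Real.exp (-Δt / ε ^ 2) • g t₀
      + ((Δt / ε) * Real.exp (-Δt / (2 * ε ^ 2))) • F m
      = (-(1 / ε)) • ((∫ s in t₀..t₁, φ s) - (t₁ - t₀) • φ m) := by
    rw [hφm, ← hht₁, ← hht₀, ← hftc, hΔt]
    match_scalars <;> ring
  rw [key, norm_smul, Real.norm_eq_abs,
    abs_of_neg (neg_lt_zero.2 (by positivity : (0:ℝ) < 1 / ε)), neg_neg]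
  calc 1 / ε * ‖(∫ s in t₀..t₁, φ s) - (t₁ - t₀) • φ m‖
      ≤ 1 / ε * (C * (t₁ - t₀) ^ 3 / 24) :=
        mul_le_mul_of_nonneg_left hmid (by positivity)
    _ = Δt ^ 3 / (24 * ε) * C := by rw [hΔt]; ring
theorem stmt_2 {E : Type*} [NormedAddCommGroup E] [NormedSpace ℝ E]
    (ε t₀ t₁ Δt : ℝ) (hε : 0 < ε) (ht : t₀ ≤ t₁) (hΔt : Δt = t₁ - t₀)
    (M₀ M₁ M₂ : ℝ) (F F' F'' g : ℝ → E)
    (hF' : ∀ s ∈ Set.Icc t₀ t₁, HasDerivAt F (F' s) s)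
    (hF'' : ∀ s ∈ Set.Icc t₀ t₁, HasDerivAt F' (F'' s) s)
    (hF''c : ContinuousOn F'' (Set.Icc t₀ t₁))
    (hM₀ : ∀ s ∈ Set.Icc t₀ t₁, ‖F s‖ ≤ M₀)
    (hM₁ : ∀ s ∈ Set.Icc t₀ t₁, ‖F' s‖ ≤ M₁)
    (hM₂ : ∀ s ∈ Set.Icc t₀ t₁, ‖F'' s‖ ≤ M₂)
    (hg : ∀ t ∈ Set.Icc t₀ t₁,
      HasDerivAt g (-(1 / ε ^ 2) • g t - (1 / ε) • F t) t) :
    ‖g t₁ - Real.exp (-Δt / ε ^ 2) • g t₀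
        + ((Δt / ε) * Real.exp (-Δt / (2 * ε ^ 2))) • F ((t₀ + t₁) / 2)‖
      ≤ (Δt ^ 3 / (24 * ε)) * (M₂ + 2 * M₁ / ε ^ 2 + M₀ / ε ^ 4) := by
  set ι : E →L[ℝ] UniformSpace.Completion E := UniformSpace.Completion.toComplL with hι
  have hιn : ∀ x : E, ‖ι x‖ = ‖x‖ := fun x => UniformSpace.Completion.norm_coe x
  have hcomp : ∀ (f f' : ℝ → E) (s : ℝ), HasDerivAt f (f' s) s →
      HasDerivAt (fun t => ι (f t)) (ι (f' s)) s :=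
    fun f f' s h => (ι.hasFDerivAt.comp_hasDerivAt s h)
  have key := stmt_2_aux ε t₀ t₁ Δt hε ht hΔt M₀ M₁ M₂
    (fun t => ι (F t)) (fun t => ι (F' t)) (fun t => ι (F'' t)) (fun t => ι (g t))
    (fun s hs => hcomp F F' s (hF' s hs))
    (fun s hs => hcomp F' F'' s (hF'' s hs))
    (fun s hs => by rw [hιn]; exact hM₀ s hs)
    (fun s hs => by rw [hιn]; exact hM₁ s hs)
    (fun s hs => by rw [hιn]; exact hM₂ s hs)
    (fun t htm => by
      have := hcomp g (fun t => -(1 / ε ^ 2) • g t - (1 / ε) • F t) t (hg t htm)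
      simpa [map_sub, map_smul] using this)
  calc ‖g t₁ - Real.exp (-Δt / ε ^ 2) • g t₀
        + ((Δt / ε) * Real.exp (-Δt / (2 * ε ^ 2))) • F ((t₀ + t₁) / 2)‖
      = ‖ι (g t₁) - Real.exp (-Δt / ε ^ 2) • ι (g t₀)
        + ((Δt / ε) * Real.exp (-Δt / (2 * ε ^ 2))) • ι (F ((t₀ + t₁) / 2))‖ := by
        rw [← map_smul, ← map_smul, ← map_sub, ← map_add, hιn]
    _ ≤ (Δt ^ 3 / (24 * ε)) * (M₂ + 2 * M₁ / ε ^ 2 + M₀ / ε ^ 4) := key
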